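/- Let V : ℝ → ℝ be continuous, μ, ℏ > 0, c ∈ ℝ, and g analytic with g(0)=0. Define T₀(u,v) = u/4 + g(v) + c and T_n(u,v) = u/4 + g(v) + c + (μ/2ℏ²)∫₀^v∫₀^u [V((x+y)/2) − V((x−y)/2)] T_{n−1}(x,y) dx dy. Then the sequence (T_n) converges absolutely and uniformly on every bounded rectangle to a continuous function T satisfying the integral equation, i.e., a solution to the time kernel equation with boundary conditions T(u,0) = u/4 + c and T(0,v) = g(v) + c exists. -/

import Mathlib

open Filter Topology intervalIntegral MeasureTheory Set

lemma TK_abs_le_of_mem_uIcc {v y : ℝ} (hy : y ∈ Set.uIcc (0:ℝ) v) : |y| ≤ |v| := by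
  rcases le_total 0 v with h | h
  · rw [Set.uIcc_of_le h] at hy
    rw [abs_of_nonneg hy.1, abs_of_nonneg h]; exact hy.2
  · rw [Set.uIcc_of_ge h] at hy
    rw [abs_of_nonpos hy.2, abs_of_nonpos h]; exact neg_le_neg hy.1

lemma TK_abs_intervalIntegral_le {v : ℝ} {f g : ℝ → ℝ}
    (hf : IntervalIntegrable f volume 0 v) (hg : IntervalIntegrable g volume 0 v)
    (hb : ∀ y ∈ Set.uIcc (0:ℝ) v, |f y| ≤ g y) :
    |∫ y in (0:ℝ)..v, f y| ≤ |∫ y in (0:ℝ)..v, g y| := by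
  rcases le_total 0 v with h | h
  · have h1 : ‖∫ y in (0:ℝ)..v, f y‖ ≤ ∫ y in (0:ℝ)..v, ‖f y‖ :=
      intervalIntegral.norm_integral_le_integral_norm h
    have h2 : (∫ y in (0:ℝ)..v, ‖f y‖) ≤ ∫ y in (0:ℝ)..v, g y := by
      apply intervalIntegral.integral_mono_on h hf.norm hg
      intro x hx
      simpa [Real.norm_eq_abs] using hb x (by rwa [Set.uIcc_of_le h])
    calc |∫ y in (0:ℝ)..v, f y| ≤ ∫ y in (0:ℝ)..v, g y := by
          simpa [Real.norm_eq_abs] using h1.trans h2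
      _ ≤ |∫ y in (0:ℝ)..v, g y| := le_abs_self _
  · rw [show (∫ y in (0:ℝ)..v, f y) = -(∫ y in v..(0:ℝ), f y) from intervalIntegral.integral_symm v 0,
      show (∫ y in (0:ℝ)..v, g y) = -(∫ y in v..(0:ℝ), g y) from intervalIntegral.integral_symm v 0,
      abs_neg, abs_neg]
    have h1 : ‖∫ y in v..(0:ℝ), f y‖ ≤ ∫ y in v..(0:ℝ), ‖f y‖ :=
      intervalIntegral.norm_integral_le_integral_norm h
    have h2 : (∫ y in v..(0:ℝ), ‖f y‖) ≤ ∫ y in v..(0:ℝ), g y := by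
      apply intervalIntegral.integral_mono_on h hf.symm.norm hg.symm
      intro x hx
      simpa [Real.norm_eq_abs] using hb x (by rw [Set.uIcc_of_ge h]; exact hx)
    calc |∫ y in v..(0:ℝ), f y| ≤ ∫ y in v..(0:ℝ), g y := by
          simpa [Real.norm_eq_abs] using h1.trans h2
      _ ≤ |∫ y in v..(0:ℝ), g y| := le_abs_self _

lemma TK_abs_integral_abs_pow (v : ℝ) (p : ℕ) :
    |∫ y in (0:ℝ)..v, |y| ^ p| = |v| ^ (p + 1) / (p + 1) := by
  rcases le_total 0 v with h | h
  · have : (∫ y in (0:ℝ)..v, |y| ^ p) = ∫ y in (0:ℝ)..v, y ^ p := by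
      apply intervalIntegral.integral_congr
      intro x hx
      rw [Set.uIcc_of_le h] at hx
      dsimp only; rw [abs_of_nonneg hx.1]
    rw [this, integral_pow]
    rw [abs_of_nonneg h]
    simp [abs_of_nonneg (by positivity : (0:ℝ) ≤ v ^ (p+1) / (p+1))]
  · have : (∫ y in (0:ℝ)..v, |y| ^ p) = ∫ y in (0:ℝ)..v, (-y) ^ p := by
      apply intervalIntegral.integral_congr
      intro x hx
      rw [Set.uIcc_of_ge h] at hx
      dsimp only; rw [abs_of_nonpos hx.2]
    rw [this]
    have h2 : (∫ y in (0:ℝ)..v, (-y) ^ p) = ∫ y in (-v)..(-0:ℝ), y ^ p :=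
      intervalIntegral.integral_comp_neg (fun y => y ^ p)
    rw [h2, integral_pow]
    rw [abs_of_nonpos h]
    rw [neg_zero]
    rw [zero_pow (Nat.succ_ne_zero p), zero_sub, abs_div, abs_neg,
      abs_of_nonneg (pow_nonneg (neg_nonneg.2 h) (p+1)),
      abs_of_pos (by positivity : (0:ℝ) < (p:ℝ)+1)]

set_option maxHeartbeats 1000000 in
lemma TK_cont_inner {K S : ℝ → ℝ → ℝ} (hK : Continuous fun p : ℝ × ℝ => K p.1 p.2)
    (hS : Continuous fun p : ℝ × ℝ => S p.1 p.2) :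
    Continuous fun q : ℝ × ℝ => ∫ x in (0:ℝ)..q.1, K x q.2 * S x q.2 := by
  have h1 : Continuous (Function.uncurry fun (q : ℝ × ℝ) (t : ℝ) => K t q.2 * S t q.2) := by
    have hm : Continuous fun r : (ℝ × ℝ) × ℝ => (r.2, r.1.2) := by fun_prop
    exact (hK.comp hm).mul (hS.comp hm)
  exact intervalIntegral.continuous_parametric_intervalIntegral_of_continuous (μ := volume)
    h1 continuous_fst

set_option maxHeartbeats 1000000 in
lemma TK_cont_double {K S : ℝ → ℝ → ℝ} (hK : Continuous fun p : ℝ × ℝ => K p.1 p.2)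
    (hS : Continuous fun p : ℝ × ℝ => S p.1 p.2) :
    Continuous fun p : ℝ × ℝ => ∫ y in (0:ℝ)..p.2, ∫ x in (0:ℝ)..p.1, K x y * S x y := by
  have H := TK_cont_inner hK hS
  have h1 : Continuous
      (Function.uncurry fun (p : ℝ × ℝ) (y : ℝ) => ∫ x in (0:ℝ)..p.1, K x y * S x y) := by
    have hm : Continuous fun r : (ℝ × ℝ) × ℝ => (r.1.1, r.2) := by fun_prop
    exact H.comp hm
  exact intervalIntegral.continuous_parametric_intervalIntegral_of_continuous (μ := volume)
    h1 continuous_snd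

set_option maxHeartbeats 1000000 in
lemma TK_cont_slice {K S : ℝ → ℝ → ℝ} (hK : Continuous fun p : ℝ × ℝ => K p.1 p.2)
    (hS : Continuous fun p : ℝ × ℝ => S p.1 p.2) (u : ℝ) :
    Continuous fun y : ℝ => ∫ x in (0:ℝ)..u, K x y * S x y := by
  have H := (TK_cont_inner hK hS).comp
    ((continuous_const.prodMk continuous_id : Continuous fun y : ℝ => ((u, y) : ℝ × ℝ)))
  exact H

lemma TK_cont_xslice {K S : ℝ → ℝ → ℝ} (hK : Continuous fun p : ℝ × ℝ => K p.1 p.2)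
    (hS : Continuous fun p : ℝ × ℝ => S p.1 p.2) (y : ℝ) :
    Continuous fun x : ℝ => K x y * S x y := by
  have h : Continuous fun p : ℝ × ℝ => K p.1 p.2 * S p.1 p.2 := hK.mul hS
  exact h.comp (continuous_id.prodMk continuous_const)

set_option maxHeartbeats 1000000 in
lemma TK_step {κ M R c0 : ℝ} {K S : ℝ → ℝ → ℝ} (p : ℕ)
    (hκ : 0 ≤ κ) (hM : 0 ≤ M) (hR : 0 ≤ R) (hc0 : 0 ≤ c0)
    (hKc : Continuous fun q : ℝ × ℝ => K q.1 q.2)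
    (hSc : Continuous fun q : ℝ × ℝ => S q.1 q.2)
    (hKb : ∀ x y, |x| ≤ R → |y| ≤ R → |K x y| ≤ M)
    (hSb : ∀ x y, |x| ≤ R → |y| ≤ R → |S x y| ≤ c0 * |y| ^ p / p.factorial)
    {u v : ℝ} (hu : |u| ≤ R) (hv : |v| ≤ R) :
    |κ * ∫ y in (0:ℝ)..v, ∫ x in (0:ℝ)..u, K x y * S x y| ≤
      κ * M * R * c0 * |v| ^ (p + 1) / (p + 1).factorial := by
  have hfint : IntervalIntegrable (fun y => ∫ x in (0:ℝ)..u, K x y * S x y) volume 0 v :=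
    (TK_cont_slice hKc hSc u).intervalIntegrable _ _
  set c1 : ℝ := M * R * c0 / p.factorial with hc1
  have hpf : (0:ℝ) < p.factorial := by exact_mod_cast p.factorial_pos
  have hc1nn : 0 ≤ c1 := by positivity
  have hgint : IntervalIntegrable (fun y => c1 * |y| ^ p) volume 0 v := by
    apply Continuous.intervalIntegrable; fun_prop
  have hb : ∀ y ∈ Set.uIcc (0:ℝ) v, |∫ x in (0:ℝ)..u, K x y * S x y| ≤ c1 * |y| ^ p := by
    intro y hy
    have hyR : |y| ≤ R := (TK_abs_le_of_mem_uIcc hy).trans hv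
    have hbd : ∀ x ∈ Set.uIoc (0:ℝ) u, ‖K x y * S x y‖ ≤ M * (c0 * |y| ^ p / p.factorial) := by
      intro x hx
      have hxR : |x| ≤ R := (TK_abs_le_of_mem_uIcc (Set.Ioc_subset_Icc_self hx)).trans hu
      rw [Real.norm_eq_abs, abs_mul]
      exact mul_le_mul (hKb x y hxR hyR) (hSb x y hxR hyR) (abs_nonneg _) hM
    have h1 := intervalIntegral.norm_integral_le_of_norm_le_const hbd
    rw [Real.norm_eq_abs, sub_zero] at h1
    calc |∫ x in (0:ℝ)..u, K x y * S x y| ≤ M * (c0 * |y| ^ p / p.factorial) * |u| := h1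
      _ ≤ M * (c0 * |y| ^ p / p.factorial) * R :=
        mul_le_mul_of_nonneg_left hu (by positivity)
      _ = c1 * |y| ^ p := by rw [hc1]; ring
  have key := TK_abs_intervalIntegral_le hfint hgint hb
  have h2 : (∫ y in (0:ℝ)..v, c1 * |y| ^ p) = c1 * ∫ y in (0:ℝ)..v, |y| ^ p :=
    intervalIntegral.integral_const_mul c1 _
  calc |κ * ∫ y in (0:ℝ)..v, ∫ x in (0:ℝ)..u, K x y * S x y|
      = κ * |∫ y in (0:ℝ)..v, ∫ x in (0:ℝ)..u, K x y * S x y| := by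
        rw [abs_mul, abs_of_nonneg hκ]
    _ ≤ κ * |∫ y in (0:ℝ)..v, c1 * |y| ^ p| := mul_le_mul_of_nonneg_left key hκ
    _ = κ * (c1 * (|v| ^ (p + 1) / (p + 1))) := by
        rw [h2, abs_mul, abs_of_nonneg hc1nn, TK_abs_integral_abs_pow]
    _ = κ * M * R * c0 * |v| ^ (p + 1) / (p + 1).factorial := by
        have hfs : ((p+1).factorial : ℝ) = (p+1) * p.factorial := by
          exact_mod_cast Nat.factorial_succ p
        rw [hfs, hc1]
        field_simp

lemma TK_TUO_add {ι : Type*} {l : Filter ι} {s : Set (ℝ × ℝ)} {F : ι → ℝ × ℝ → ℝ}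
    {f h : ℝ × ℝ → ℝ} (hF : TendstoUniformlyOn F f l s) :
    TendstoUniformlyOn (fun n x => h x + F n x) (fun x => h x + f x) l s := by
  rw [Metric.tendstoUniformlyOn_iff] at hF ⊢
  intro ε hε
  filter_upwards [hF ε hε] with n hn x hx
  simpa [Real.dist_eq, add_sub_add_left_eq_sub] using hn x hx

lemma TK_double_sub {K S1 S2 : ℝ → ℝ → ℝ} (hK : Continuous fun p : ℝ × ℝ => K p.1 p.2)
    (h1 : Continuous fun p : ℝ × ℝ => S1 p.1 p.2)
    (h2 : Continuous fun p : ℝ × ℝ => S2 p.1 p.2) (u v : ℝ) :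
    (∫ y in (0:ℝ)..v, ∫ x in (0:ℝ)..u, K x y * S1 x y) -
      (∫ y in (0:ℝ)..v, ∫ x in (0:ℝ)..u, K x y * S2 x y) =
    ∫ y in (0:ℝ)..v, ∫ x in (0:ℝ)..u, K x y * (S1 x y - S2 x y) := by
  rw [← intervalIntegral.integral_sub ((TK_cont_slice hK h1 u).intervalIntegrable _ _)
    ((TK_cont_slice hK h2 u).intervalIntegrable _ _)]
  apply intervalIntegral.integral_congr
  intro y hy
  dsimp only
  rw [← intervalIntegral.integral_sub ((TK_cont_xslice hK h1 y).intervalIntegrable _ _)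
    ((TK_cont_xslice hK h2 y).intervalIntegrable _ _)]
  apply intervalIntegral.integral_congr
  intro x hx
  dsimp only
  ring

lemma TK_bound_on_square {f : ℝ × ℝ → ℝ} (hf : Continuous f) (R : ℝ) :
    ∃ M : ℝ, 0 ≤ M ∧ ∀ x y : ℝ, |x| ≤ R → |y| ≤ R → |f (x, y)| ≤ M := by
  obtain ⟨M0, hM0⟩ := (isCompact_Icc.prod isCompact_Icc :
    IsCompact (Set.Icc (-R) R ×ˢ Set.Icc (-R) R)).exists_bound_of_continuousOn hf.continuousOn
  refine ⟨max M0 0, le_max_right _ _, fun x y hx hy => ?_⟩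
  have hm : ((x, y) : ℝ × ℝ) ∈ Set.Icc (-R) R ×ˢ Set.Icc (-R) R :=
    ⟨⟨(abs_le.1 hx).1, (abs_le.1 hx).2⟩, ⟨(abs_le.1 hy).1, (abs_le.1 hy).2⟩⟩
  have := hM0 _ hm
  rw [Real.norm_eq_abs] at this
  exact this.trans (le_max_left _ _)

set_option maxHeartbeats 2000000
theorem time_kernel_existence (μ ℏ c : ℝ) (hμ : 0 < μ) (hℏ : 0 < ℏ)
    (V g : ℝ → ℝ) (hV : Continuous V) (hg : AnalyticOn ℝ g Set.univ) (hg0 : g 0 = 0)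
    (Tn : ℕ → ℝ → ℝ → ℝ)
    (h0 : ∀ u v : ℝ, Tn 0 u v = u / 4 + g v + c)
    (hrec : ∀ n : ℕ, ∀ u v : ℝ, Tn (n + 1) u v = u / 4 + g v + c +
      μ / (2 * ℏ ^ 2) *
        ∫ y in (0:ℝ)..v, ∫ x in (0:ℝ)..u, (V ((x + y) / 2) - V ((x - y) / 2)) * Tn n x y) :
    ∃ T : ℝ → ℝ → ℝ,
      Continuous (fun p : ℝ × ℝ => T p.1 p.2) ∧
      (∀ a b a' b' : ℝ,
        TendstoUniformlyOn (fun n (p : ℝ × ℝ) => Tn n p.1 p.2) (fun p => T p.1 p.2)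
          atTop (Set.Icc a b ×ˢ Set.Icc a' b')) ∧
      (∀ u v : ℝ, T u v = u / 4 + g v + c +
        μ / (2 * ℏ ^ 2) *
          ∫ y in (0:ℝ)..v, ∫ x in (0:ℝ)..u, (V ((x + y) / 2) - V ((x - y) / 2)) * T x y) ∧
      (∀ u : ℝ, T u 0 = u / 4 + c) ∧ (∀ v : ℝ, T 0 v = g v + c) := by
  have hκ : (0:ℝ) ≤ μ / (2 * ℏ ^ 2) := by positivity
  have hgc : Continuous g := by
    rw [← continuousOn_univ]; exact hg.continuousOn
  have hKc : Continuous fun p : ℝ × ℝ => V ((p.1 + p.2) / 2) - V ((p.1 - p.2) / 2) := by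
    fun_prop
  -- continuity of each iterate
  have hTc : ∀ n, Continuous fun p : ℝ × ℝ => Tn n p.1 p.2 := by
    intro n
    induction n with
    | zero =>
      have e : (fun p : ℝ × ℝ => Tn 0 p.1 p.2) = fun p : ℝ × ℝ => p.1 / 4 + g p.2 + c :=
        funext fun p => h0 p.1 p.2
      rw [e]; fun_prop
    | succ n ih =>
      have e : (fun p : ℝ × ℝ => Tn (n + 1) p.1 p.2) = fun p : ℝ × ℝ =>
          p.1 / 4 + g p.2 + c + μ / (2 * ℏ ^ 2) *
            ∫ y in (0:ℝ)..p.2, ∫ x in (0:ℝ)..p.1,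
              (V ((x + y) / 2) - V ((x - y) / 2)) * Tn n x y :=
        funext fun p => hrec n p.1 p.2
      rw [e]
      have hd : Continuous fun p : ℝ × ℝ => ∫ y in (0:ℝ)..p.2, ∫ x in (0:ℝ)..p.1,
          (V ((x + y) / 2) - V ((x - y) / 2)) * Tn n x y :=
        TK_cont_double (K := fun x y => V ((x + y) / 2) - V ((x - y) / 2)) (S := Tn n) hKc ih
      exact ((((continuous_fst.div_const 4).add (hgc.comp continuous_snd)).add
        continuous_const).add (continuous_const.mul hd))
  -- recursion for differences
  have hD0 : ∀ u v : ℝ, Tn 1 u v - Tn 0 u v = μ / (2 * ℏ ^ 2) *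
      ∫ y in (0:ℝ)..v, ∫ x in (0:ℝ)..u, (V ((x + y) / 2) - V ((x - y) / 2)) * Tn 0 x y := by
    intro u v; rw [hrec 0 u v, h0 u v]; ring
  have hDrec : ∀ (n : ℕ) (u v : ℝ), Tn (n + 2) u v - Tn (n + 1) u v = μ / (2 * ℏ ^ 2) *
      ∫ y in (0:ℝ)..v, ∫ x in (0:ℝ)..u, (V ((x + y) / 2) - V ((x - y) / 2)) *
        (Tn (n + 1) x y - Tn n x y) := by
    intro n u v
    have hsub := TK_double_sub (K := fun x y => V ((x + y) / 2) - V ((x - y) / 2))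
      (S1 := Tn (n + 1)) (S2 := Tn n) hKc (hTc (n + 1)) (hTc n) u v
    rw [hrec (n + 1) u v, hrec n u v, ← hsub]
    ring
  -- the key uniform bound on squares
  have hkey : ∀ R : ℝ, 0 ≤ R → ∃ un : ℕ → ℝ, Summable un ∧
      ∀ (n : ℕ) (u v : ℝ), |u| ≤ R → |v| ≤ R → |Tn (n + 1) u v - Tn n u v| ≤ un n := by
    intro R hR
    obtain ⟨M, hM, hMb⟩ := TK_bound_on_square hKc R
    obtain ⟨C, hC, hCb⟩ := TK_bound_on_square (hTc 0) R
    have bound : ∀ (n : ℕ) (u v : ℝ), |u| ≤ R → |v| ≤ R →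
        |Tn (n + 1) u v - Tn n u v| ≤
          C * (μ / (2 * ℏ ^ 2) * M * R) ^ (n + 1) * |v| ^ (n + 1) / (n + 1).factorial := by
      intro n
      induction n with
      | zero =>
        intro u v hu hv
        rw [hD0 u v]
        have hstep := TK_step (K := fun x y => V ((x + y) / 2) - V ((x - y) / 2))
          (S := Tn 0) (p := 0) hκ hM hR hC hKc (hTc 0) hMb
          (fun x y hx hy => by simpa using hCb x y hx hy) hu hv
        refine hstep.trans (le_of_eq ?_)
        simp only [zero_add, pow_one, Nat.factorial_one, Nat.cast_one]
        ring
      | succ n ih =>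
        intro u v hu hv
        rw [hDrec n u v]
        have hstep := TK_step (K := fun x y => V ((x + y) / 2) - V ((x - y) / 2))
          (S := fun x y => Tn (n + 1) x y - Tn n x y) (p := n + 1) hκ hM hR
          (c0 := C * (μ / (2 * ℏ ^ 2) * M * R) ^ (n + 1)) (by positivity) hKc
          ((hTc (n + 1)).sub (hTc n)) hMb
          (fun x y hx hy => (ih x y hx hy).trans (le_of_eq (by ring))) hu hv
        refine hstep.trans (le_of_eq ?_)
        ring
    refine ⟨fun n => C * (μ / (2 * ℏ ^ 2) * M * R * R) ^ (n + 1) / (n + 1).factorial, ?_, ?_⟩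
    · have hs := (Real.summable_pow_div_factorial
        (μ / (2 * ℏ ^ 2) * M * R * R)).comp_injective Nat.succ_injective
      have := hs.mul_left C
      simpa [Function.comp, mul_div_assoc] using this
    · intro n u v hu hv
      refine (bound n u v hu hv).trans ?_
      have hpow : |v| ^ (n + 1) ≤ R ^ (n + 1) := pow_le_pow_left₀ (abs_nonneg v) hv (n + 1)
      have hfac : (0:ℝ) < (n + 1).factorial := by exact_mod_cast (n + 1).factorial_pos
      rw [div_le_div_iff₀ hfac hfac]
      have h1 : C * (μ / (2 * ℏ ^ 2) * M * R) ^ (n + 1) * |v| ^ (n + 1) ≤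
          C * (μ / (2 * ℏ ^ 2) * M * R) ^ (n + 1) * R ^ (n + 1) :=
        mul_le_mul_of_nonneg_left hpow (by positivity)
      calc C * (μ / (2 * ℏ ^ 2) * M * R) ^ (n + 1) * |v| ^ (n + 1) * (n + 1).factorial ≤
          C * (μ / (2 * ℏ ^ 2) * M * R) ^ (n + 1) * R ^ (n + 1) * (n + 1).factorial := by
            exact mul_le_mul_of_nonneg_right h1 hfac.le
        _ = C * (μ / (2 * ℏ ^ 2) * M * R * R) ^ (n + 1) * (n + 1).factorial := by
            rw [mul_pow]; ring
  -- the limit function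
  set T : ℝ → ℝ → ℝ := fun u v => Tn 0 u v + ∑' k, (Tn (k + 1) u v - Tn k u v) with hTdef
  -- uniform convergence on rectangles
  have huc : ∀ a b a' b' : ℝ,
      TendstoUniformlyOn (fun n (p : ℝ × ℝ) => Tn n p.1 p.2) (fun p => T p.1 p.2)
        atTop (Set.Icc a b ×ˢ Set.Icc a' b') := by
    intro a b a' b'
    have hR : (0:ℝ) ≤ max (max |a| |b|) (max |a'| |b'|) :=
      (abs_nonneg a).trans ((le_max_left _ _).trans (le_max_left _ _))
    set R := max (max |a| |b|) (max |a'| |b'|) with hRdef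
    have hsub : Set.Icc a b ×ˢ Set.Icc a' b' ⊆ Set.Icc (-R) R ×ˢ Set.Icc (-R) R := by
      rintro ⟨x, y⟩ ⟨hx, hy⟩
      constructor
      · constructor
        · have : |a| ≤ R := (le_max_left _ _).trans (le_max_left _ _)
          linarith [neg_abs_le a, hx.1]
        · have : |b| ≤ R := (le_max_right _ _).trans (le_max_left _ _)
          linarith [le_abs_self b, hx.2]
      · constructor
        · have : |a'| ≤ R := (le_max_left _ _).trans (le_max_right _ _)
          linarith [neg_abs_le a', hy.1]
        · have : |b'| ≤ R := (le_max_right _ _).trans (le_max_right _ _)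
          linarith [le_abs_self b', hy.2]
    obtain ⟨un, hsum, hb⟩ := hkey R hR
    have h1 := tendstoUniformlyOn_tsum_nat hsum
      (f := fun k (p : ℝ × ℝ) => Tn (k + 1) p.1 p.2 - Tn k p.1 p.2)
      (s := Set.Icc (-R) R ×ˢ Set.Icc (-R) R)
      (fun k p hp => by
        rw [Real.norm_eq_abs]
        exact hb k p.1 p.2 (abs_le.2 ⟨hp.1.1, hp.1.2⟩) (abs_le.2 ⟨hp.2.1, hp.2.2⟩))
    have h2 := TK_TUO_add (h := fun p : ℝ × ℝ => Tn 0 p.1 p.2) h1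
    have h3 := h2.mono hsub
    have h4 := h3.congr (F' := fun n (p : ℝ × ℝ) => Tn n p.1 p.2)
      (Eventually.of_forall (fun n p _ => by
        dsimp only
        rw [Finset.sum_range_sub (f := fun k => Tn k p.1 p.2)]
        ring))
    exact h4
  -- continuity of T
  have hTcont : Continuous fun p : ℝ × ℝ => T p.1 p.2 := by
    rw [continuous_iff_continuousAt]
    intro p
    have hnb : Set.Icc (p.1 - 1) (p.1 + 1) ×ˢ Set.Icc (p.2 - 1) (p.2 + 1) ∈ 𝓝 p :=
      prod_mem_nhds (Icc_mem_nhds (by linarith) (by linarith))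
        (Icc_mem_nhds (by linarith) (by linarith))
    have hco : ContinuousOn (fun q : ℝ × ℝ => T q.1 q.2)
        (Set.Icc (p.1 - 1) (p.1 + 1) ×ˢ Set.Icc (p.2 - 1) (p.2 + 1)) :=
      (huc _ _ _ _).continuousOn (Eventually.of_forall fun n => (hTc n).continuousOn).frequently
    exact hco.continuousAt hnb
  -- pointwise convergence
  have htend : ∀ u v : ℝ, Tendsto (fun n => Tn n u v) atTop (𝓝 (T u v)) := by
    intro u v
    have hmem : ((u, v) : ℝ × ℝ) ∈
        Set.Icc (-(max |u| |v|)) (max |u| |v|) ×ˢ Set.Icc (-(max |u| |v|)) (max |u| |v|) := by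
      constructor
      · exact ⟨by linarith [neg_abs_le u, le_max_left |u| |v|],
          (le_abs_self u).trans (le_max_left _ _)⟩
      · exact ⟨by linarith [neg_abs_le v, le_max_right |u| |v|],
          (le_abs_self v).trans (le_max_right _ _)⟩
    exact (huc (-(max |u| |v|)) (max |u| |v|) (-(max |u| |v|)) (max |u| |v|)).tendsto_at hmem
  -- the fixed point equation
  have hfix : ∀ u v : ℝ, T u v = u / 4 + g v + c + μ / (2 * ℏ ^ 2) *
      ∫ y in (0:ℝ)..v, ∫ x in (0:ℝ)..u, (V ((x + y) / 2) - V ((x - y) / 2)) * T x y := by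
    intro u v
    have hR : (0:ℝ) ≤ max |u| |v| := (abs_nonneg u).trans (le_max_left _ _)
    set R := max |u| |v| with hRdef
    have huR : |u| ≤ R := le_max_left _ _
    have hvR : |v| ≤ R := le_max_right _ _
    -- convergence of the double integrals
    have hI : Tendsto (fun n => ∫ y in (0:ℝ)..v, ∫ x in (0:ℝ)..u,
        (V ((x + y) / 2) - V ((x - y) / 2)) * Tn n x y) atTop
        (𝓝 (∫ y in (0:ℝ)..v, ∫ x in (0:ℝ)..u,
          (V ((x + y) / 2) - V ((x - y) / 2)) * T x y)) := by
      rw [Metric.tendsto_atTop]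
      intro ε hε
      obtain ⟨M, hM, hMb⟩ := TK_bound_on_square hKc R
      have hq : (0:ℝ) ≤ M * |u| * |v| := by positivity
      have hδ : (0:ℝ) < ε / (M * |u| * |v| + 1) := by positivity
      have hUC := huc (-R) R (-R) R
      rw [Metric.tendstoUniformlyOn_iff] at hUC
      obtain ⟨N, hN⟩ := eventually_atTop.1 (hUC _ hδ)
      refine ⟨N, fun n hn => ?_⟩
      have hclose : ∀ x y : ℝ, |x| ≤ R → |y| ≤ R →
          |Tn n x y - T x y| ≤ ε / (M * |u| * |v| + 1) := by
        intro x y hx hy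
        have := hN n hn (x, y) ⟨⟨(abs_le.1 hx).1, (abs_le.1 hx).2⟩,
          ⟨(abs_le.1 hy).1, (abs_le.1 hy).2⟩⟩
        rw [Real.dist_eq] at this
        rw [abs_sub_comm]
        exact this.le
      have hdiff := TK_double_sub (K := fun x y => V ((x + y) / 2) - V ((x - y) / 2))
        (S1 := Tn n) (S2 := T) hKc (hTc n) hTcont u v
      rw [Real.dist_eq, hdiff]
      have hbd1 : ∀ y ∈ Set.uIoc (0:ℝ) v, ‖∫ x in (0:ℝ)..u,
          (V ((x + y) / 2) - V ((x - y) / 2)) * (Tn n x y - T x y)‖ ≤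
            M * (ε / (M * |u| * |v| + 1)) * |u| := by
        intro y hy
        have hyR : |y| ≤ R :=
          (TK_abs_le_of_mem_uIcc (Set.Ioc_subset_Icc_self hy)).trans hvR
        have hbd0 : ∀ x ∈ Set.uIoc (0:ℝ) u, ‖(V ((x + y) / 2) - V ((x - y) / 2)) *
            (Tn n x y - T x y)‖ ≤ M * (ε / (M * |u| * |v| + 1)) := by
          intro x hx
          have hxR : |x| ≤ R :=
            (TK_abs_le_of_mem_uIcc (Set.Ioc_subset_Icc_self hx)).trans huR
          rw [Real.norm_eq_abs, abs_mul]
          exact mul_le_mul (hMb x y hxR hyR) (hclose x y hxR hyR) (abs_nonneg _) hM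
        have := intervalIntegral.norm_integral_le_of_norm_le_const hbd0
        rwa [sub_zero] at this
      have h2 := intervalIntegral.norm_integral_le_of_norm_le_const hbd1
      rw [sub_zero, Real.norm_eq_abs] at h2
      refine lt_of_le_of_lt h2 ?_
      have key : M * (ε / (M * |u| * |v| + 1)) * |u| * |v| =
          ε * ((M * |u| * |v|) / (M * |u| * |v| + 1)) := by ring
      rw [key]
      calc ε * ((M * |u| * |v|) / (M * |u| * |v| + 1)) < ε * 1 := by
            apply mul_lt_mul_of_pos_left _ hε
            rw [div_lt_one (by positivity)]
            linarith
        _ = ε := mul_one ε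
    have e1 : Tendsto (fun n => Tn (n + 1) u v) atTop (𝓝 (T u v)) :=
      (htend u v).comp (tendsto_add_atTop_nat 1)
    have e2 : Tendsto (fun n => Tn (n + 1) u v) atTop (𝓝 (u / 4 + g v + c +
        μ / (2 * ℏ ^ 2) * ∫ y in (0:ℝ)..v, ∫ x in (0:ℝ)..u,
          (V ((x + y) / 2) - V ((x - y) / 2)) * T x y)) := by
      have e : (fun n => Tn (n + 1) u v) = fun n => u / 4 + g v + c +
          μ / (2 * ℏ ^ 2) * ∫ y in (0:ℝ)..v, ∫ x in (0:ℝ)..u,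
            (V ((x + y) / 2) - V ((x - y) / 2)) * Tn n x y :=
        funext fun n => hrec n u v
      rw [e]
      exact tendsto_const_nhds.add (hI.const_mul _)
    exact tendsto_nhds_unique e1 e2
  refine ⟨T, hTcont, huc, hfix, ?_, ?_⟩
  · intro u
    rw [hfix u 0, intervalIntegral.integral_same]
    rw [hg0]
    ring
  · intro v
    have : (∫ y in (0:ℝ)..v, ∫ x in (0:ℝ)..(0:ℝ),
        (V ((x + y) / 2) - V ((x - y) / 2)) * T x y) = 0 := by
      have : ∀ y : ℝ, (∫ x in (0:ℝ)..(0:ℝ),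
          (V ((x + y) / 2) - V ((x - y) / 2)) * T x y) = 0 :=
        fun y => intervalIntegral.integral_same
      simp [this]
    rw [hfix 0 v, this]
    ring
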